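/- For every positive integer n, the clique cover number of the graph G_n equals n + 2. -/

import Mathlib

open Finset

/-- A clique covering of `G`: a finite family of cliques covering every edge. -/
def IsCliqueCover {V : Type*} (G : SimpleGraph V) (𝒞 : Finset (Finset V)) : Prop :=
  (∀ C ∈ 𝒞, G.IsClique (C : Set V)) ∧
  ∀ u v, G.Adj u v → ∃ C ∈ 𝒞, u ∈ C ∧ v ∈ C

/-- A clique partition of `G`: every edge lies in exactly one clique of the family. -/
def IsCliquePartition {V : Type*} (G : SimpleGraph V) (𝒞 : Finset (Finset V)) : Prop :=
  (∀ C ∈ 𝒞, G.IsClique (C : Set V)) ∧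
  ∀ u v, G.Adj u v → ∃! C, C ∈ 𝒞 ∧ u ∈ C ∧ v ∈ C

/-- The sigma clique cover number: minimum total size of cliques in a clique covering. -/
noncomputable def scc {V : Type*} (G : SimpleGraph V) : ℕ :=
  sInf {k | ∃ 𝒞, IsCliqueCover G 𝒞 ∧ ∑ C ∈ 𝒞, C.card = k}

/-- The sigma clique partition number: minimum total size of cliques in a clique partition. -/
noncomputable def scp {V : Type*} (G : SimpleGraph V) : ℕ :=
  sInf {k | ∃ 𝒞, IsCliquePartition G 𝒞 ∧ ∑ C ∈ 𝒞, C.card = k}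

/-- The clique cover number: minimum number of cliques in a clique covering. -/
noncomputable def cc {V : Type*} (G : SimpleGraph V) : ℕ :=
  sInf {k | ∃ 𝒞, IsCliqueCover G 𝒞 ∧ 𝒞.card = k}

/-- The clique partition number: minimum number of cliques in a clique partition. -/
noncomputable def cp {V : Type*} (G : SimpleGraph V) : ℕ :=
  sInf {k | ∃ 𝒞, IsCliquePartition G 𝒞 ∧ 𝒞.card = k}

/-- `scc'`: the minimum total size of cliques over clique coverings achieving `cc G`. -/
noncomputable def scc' {V : Type*} (G : SimpleGraph V) : ℕ :=
  sInf {k | ∃ 𝒞, IsCliqueCover G 𝒞 ∧ 𝒞.card = cc G ∧ ∑ C ∈ 𝒞, C.card = k}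
/-- The vertex set of the graph `Gₙ`: `x₀`, `y₀`, `X = {x i}`, `Y = {y i}`, `Z = {z i}`. -/
inductive Vtx (n : ℕ) : Type where
  | x0 : Vtx n
  | y0 : Vtx n
  | x : Fin n → Vtx n
  | y : Fin n → Vtx n
  | z : Fin n → Vtx n
  deriving DecidableEq, Fintype

/-- Membership in `X ∪ {x₀}`. -/
def inXx0 {n : ℕ} : Vtx n → Prop
  | .x0 => True
  | .x _ => True
  | _ => False

/-- Membership in `Y ∪ {y₀}`. -/
def inYy0 {n : ℕ} : Vtx n → Prop
  | .y0 => True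
  | .y _ => True
  | _ => False

/-- Membership in `Z`. -/
def inZ {n : ℕ} : Vtx n → Prop
  | .z _ => True
  | _ => False

/-- Membership in `X ∪ Y`. -/
def inXY {n : ℕ} : Vtx n → Prop
  | .x _ => True
  | .y _ => True
  | _ => False

/-- `xyPair u v` holds iff `u = x i` and `v = y i` for some `i`. -/
def xyPair {n : ℕ} : Vtx n → Vtx n → Prop
  | .x i, .y j => i = j
  | _, _ => False

/-- The graph `Gₙ`: `X ∪ {x₀}`, `Y ∪ {y₀}` and `Z` are cliques, every vertex of `Z` is
adjacent to every vertex of `X ∪ Y`, and `x i` is adjacent to `y j` iff `i = j`. -/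
def Gn (n : ℕ) : SimpleGraph (Vtx n) where
  Adj u v := u ≠ v ∧ (inXx0 u ∧ inXx0 v ∨ inYy0 u ∧ inYy0 v ∨ inZ u ∧ inZ v ∨
    inZ u ∧ inXY v ∨ inXY u ∧ inZ v ∨ xyPair u v ∨ xyPair v u)
  symm := ⟨by
    rintro u v ⟨h1, h2⟩
    exact ⟨h1.symm, by tauto⟩⟩
  loopless := ⟨fun u h => h.1 rfl⟩

section Aux

variable {n : ℕ}

/-- The clique `X ∪ {x₀}` as a Finset. -/
def Xc (n : ℕ) : Finset (Vtx n) := insert .x0 (Finset.univ.image .x)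

/-- The clique `Y ∪ {y₀}` as a Finset. -/
def Yc (n : ℕ) : Finset (Vtx n) := insert .y0 (Finset.univ.image .y)

/-- The clique `{x i, y i} ∪ Z` as a Finset. -/
def Zc (n : ℕ) (i : Fin n) : Finset (Vtx n) :=
  insert (.x i) (insert (.y i) (Finset.univ.image .z))

lemma mem_Xc {w : Vtx n} : w ∈ Xc n ↔ inXx0 w := by
  cases w <;> simp [Xc, inXx0]

lemma mem_Yc {w : Vtx n} : w ∈ Yc n ↔ inYy0 w := by
  cases w <;> simp [Yc, inYy0]

lemma mem_Zc {w : Vtx n} {i : Fin n} :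
    w ∈ Zc n i ↔ w = .x i ∨ w = .y i ∨ inZ w := by
  cases w <;> simp [Zc, inZ]

lemma clique_Xc : (Gn n).IsClique (Xc n : Set (Vtx n)) := by
  intro a ha b hb hne
  rw [Finset.mem_coe, mem_Xc] at ha hb
  exact ⟨hne, Or.inl ⟨ha, hb⟩⟩

lemma clique_Yc : (Gn n).IsClique (Yc n : Set (Vtx n)) := by
  intro a ha b hb hne
  rw [Finset.mem_coe, mem_Yc] at ha hb
  exact ⟨hne, Or.inr (Or.inl ⟨ha, hb⟩)⟩

lemma clique_Zc (i : Fin n) : (Gn n).IsClique (Zc n i : Set (Vtx n)) := by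
  intro a ha b hb hne
  rw [Finset.mem_coe, mem_Zc] at ha hb
  refine ⟨hne, ?_⟩
  rcases ha with rfl | rfl | ha <;> rcases hb with rfl | rfl | hb <;>
    simp_all [inZ, inXY, xyPair]

/-- The covering family with `n + 2` cliques. -/
def Fam (n : ℕ) : Finset (Finset (Vtx n)) :=
  insert (Xc n) (insert (Yc n) (Finset.univ.image (Zc n)))

lemma cover_Fam : IsCliqueCover (Gn n) (Fam n) := by
  constructor
  · intro C hC
    rw [Fam, Finset.mem_insert, Finset.mem_insert] at hC
    rcases hC with rfl | rfl | hC
    · exact clique_Xc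
    · exact clique_Yc
    · obtain ⟨i, -, rfl⟩ := Finset.mem_image.mp hC
      exact clique_Zc i
  · rintro u v ⟨hne, hor⟩
    have hXm : Xc n ∈ Fam n := Finset.mem_insert_self _ _
    have hYm : Yc n ∈ Fam n := Finset.mem_insert_of_mem (Finset.mem_insert_self _ _)
    have hZm : ∀ i : Fin n, Zc n i ∈ Fam n := fun i =>
      Finset.mem_insert_of_mem (Finset.mem_insert_of_mem
        (Finset.mem_image_of_mem _ (Finset.mem_univ i)))
    rcases hor with ⟨h1, h2⟩ | ⟨h1, h2⟩ | ⟨h1, h2⟩ | ⟨h1, h2⟩ | ⟨h1, h2⟩ | h | h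
    · exact ⟨Xc n, hXm, mem_Xc.mpr h1, mem_Xc.mpr h2⟩
    · exact ⟨Yc n, hYm, mem_Yc.mpr h1, mem_Yc.mpr h2⟩
    · cases u with
      | z i => exact ⟨Zc n i, hZm i, mem_Zc.mpr (Or.inr (Or.inr h1)),
          mem_Zc.mpr (Or.inr (Or.inr h2))⟩
      | _ => exact absurd h1 (by simp [inZ])
    · cases v with
      | x i => exact ⟨Zc n i, hZm i, mem_Zc.mpr (Or.inr (Or.inr h1)),
          mem_Zc.mpr (Or.inl rfl)⟩
      | y i => exact ⟨Zc n i, hZm i, mem_Zc.mpr (Or.inr (Or.inr h1)),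
          mem_Zc.mpr (Or.inr (Or.inl rfl))⟩
      | _ => exact absurd h2 (by simp [inXY])
    · cases u with
      | x i => exact ⟨Zc n i, hZm i, mem_Zc.mpr (Or.inl rfl),
          mem_Zc.mpr (Or.inr (Or.inr h2))⟩
      | y i => exact ⟨Zc n i, hZm i, mem_Zc.mpr (Or.inr (Or.inl rfl)),
          mem_Zc.mpr (Or.inr (Or.inr h2))⟩
      | _ => exact absurd h1 (by simp [inXY])
    · cases u <;> cases v <;> simp [xyPair] at h
      case x.y i j =>
        subst h
        exact ⟨Zc n i, hZm i, mem_Zc.mpr (Or.inl rfl), mem_Zc.mpr (Or.inr (Or.inl rfl))⟩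
    · cases u <;> cases v <;> simp [xyPair] at h
      case y.x i j =>
        subst h
        exact ⟨Zc n j, hZm j, mem_Zc.mpr (Or.inr (Or.inl rfl)), mem_Zc.mpr (Or.inl rfl)⟩

lemma card_Fam : (Fam n).card = n + 2 := by
  have hZinj : Function.Injective (Zc n) := by
    intro i j hij
    have : (Vtx.x i : Vtx n) ∈ Zc n j := by
      rw [← hij]; exact mem_Zc.mpr (Or.inl rfl)
    rcases mem_Zc.mp this with h | h | h
    · exact Vtx.x.inj h
    · cases h
    · simp [inZ] at h
  rw [Fam, Finset.card_insert_of_notMem, Finset.card_insert_of_notMem,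
    Finset.card_image_of_injective _ hZinj, Finset.card_univ, Fintype.card_fin]
  · intro hmem
    obtain ⟨i, -, hi⟩ := Finset.mem_image.mp hmem
    have : (Vtx.y0 : Vtx n) ∈ Zc n i := by rw [hi]; exact mem_Yc.mpr trivial
    rcases mem_Zc.mp this with h | h | h <;> simp_all [inZ]
  · intro hmem
    rcases Finset.mem_insert.mp hmem with h | h
    · have : (Vtx.x0 : Vtx n) ∈ Yc n := by rw [← h]; exact mem_Xc.mpr trivial
      rw [mem_Yc] at this; exact this
    · obtain ⟨i, -, hi⟩ := Finset.mem_image.mp h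
      have : (Vtx.x0 : Vtx n) ∈ Zc n i := by rw [hi]; exact mem_Xc.mpr trivial
      rcases mem_Zc.mp this with h | h | h <;> simp_all [inZ]

lemma not_adj_x_y {i j : Fin n} (hij : i ≠ j) : ¬ (Gn n).Adj (.x i) (.y j) := by
  rintro ⟨-, h⟩
  simp [inXx0, inYy0, inZ, inXY, xyPair] at h
  exact hij h

lemma not_adj_x0_y {i : Fin n} : ¬ (Gn n).Adj (.x0) (.y i) := by
  rintro ⟨-, h⟩
  simp [inXx0, inYy0, inZ, inXY, xyPair] at h

lemma not_adj_x_y0 {i : Fin n} : ¬ (Gn n).Adj (.x i) (.y0) := by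
  rintro ⟨-, h⟩
  simp [inXx0, inYy0, inZ, inXY, xyPair] at h

lemma not_adj_x0_y0 : ¬ (Gn n).Adj (.x0 : Vtx n) (.y0) := by
  rintro ⟨-, h⟩
  simp [inXx0, inYy0, inZ, inXY, xyPair] at h

lemma lower_bound (hn : 1 ≤ n) (𝒞 : Finset (Finset (Vtx n)))
    (h : IsCliqueCover (Gn n) 𝒞) : n + 2 ≤ 𝒞.card := by
  set i0 : Fin n := ⟨0, hn⟩ with hi0
  -- the witness edges
  let p : Fin n ⊕ Bool → Vtx n × Vtx n := fun a =>
    match a with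
    | .inl i => (.x i, .y i)
    | .inr true => (.x0, .x i0)
    | .inr false => (.y0, .y i0)
  have hadj : ∀ a, (Gn n).Adj (p a).1 (p a).2 := by
    rintro (i | b)
    · exact ⟨by simp, Or.inr (Or.inr (Or.inr (Or.inr (Or.inr (Or.inl rfl)))))⟩
    · cases b
      · exact ⟨by simp, Or.inr (Or.inl ⟨trivial, trivial⟩)⟩
      · exact ⟨by simp, Or.inl ⟨trivial, trivial⟩⟩
  have H : ∀ a, ∃ C ∈ 𝒞, (p a).1 ∈ C ∧ (p a).2 ∈ C := fun a => h.2 _ _ (hadj a)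
  choose f hf1 hf2 hf3 using H
  have key : ∀ a b, f a = f b → ∀ u v, u ∈ f a → v ∈ f b → u ≠ v → (Gn n).Adj u v := by
    intro a b hab u v hu hv huv
    exact h.1 (f a) (hf1 a) hu (hab ▸ hv) huv
  have hinj : Function.Injective f := by
    rintro (i | b) (j | c) hab
    · by_contra hne
      have hij : i ≠ j := fun h => hne (by rw [h])
      exact not_adj_x_y hij (key _ _ hab _ _ (hf2 (.inl i)) (hf3 (.inl j)) (by simp))
    · exfalso
      cases c
      · exact not_adj_x_y0 (key _ _ hab _ _ (hf2 (.inl i)) (hf2 (.inr false)) (by simp))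
      · exact not_adj_x0_y
          (key _ _ hab.symm _ _ (hf2 (.inr true)) (hf3 (.inl i)) (by simp))
    · exfalso
      cases b
      · exact not_adj_x_y0
          (key _ _ hab.symm _ _ (hf2 (.inl j)) (hf2 (.inr false)) (by simp))
      · exact not_adj_x0_y (key _ _ hab _ _ (hf2 (.inr true)) (hf3 (.inl j)) (by simp))
    · cases b <;> cases c
      · rfl
      · exact absurd (key _ _ hab _ _ (hf2 (.inr false)) (hf2 (.inr true)) (by simp))
          (fun hadj => not_adj_x0_y0 ((Gn n).adj_symm hadj))
      · exact absurd (key _ _ hab _ _ (hf2 (.inr true)) (hf2 (.inr false)) (by simp))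
          not_adj_x0_y0
      · rfl
  have hcard := Fintype.card_le_of_injective
    (fun a => (⟨f a, hf1 a⟩ : {C // C ∈ 𝒞}))
    (fun a b hab => hinj (Subtype.ext_iff.mp hab))
  simpa using hcard

end Aux

/-- For every positive integer `n`, the clique cover number of `Gₙ` equals `n + 2`. -/
theorem stmt_1 (n : ℕ) (hn : 1 ≤ n) : cc (Gn n) = n + 2 := by
  have hmem : n + 2 ∈ {k | ∃ 𝒞, IsCliqueCover (Gn n) 𝒞 ∧ 𝒞.card = k} :=
    ⟨Fam n, cover_Fam, card_Fam⟩
  refine le_antisymm (Nat.sInf_le hmem) (le_csInf ⟨_, hmem⟩ ?_)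
  rintro k ⟨𝒞, hC, rfl⟩
  exact lower_bound hn 𝒞 hC
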